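/- Let K = ℚ(i) be the field of Gaussian rationals. The polynomial X³ − 3X − 2i is irreducible over K. -/

import Mathlib

open Polynomial

private lemma zmod5_no_root : ∀ z : ZMod 5, z ^ 3 + 3 * z + 2 ≠ 0 := by decide

private lemma gZ_irred : Irreducible (X ^ 3 + 3 * X + 2 : Polynomial ℤ) := by
  haveI : Fact (Nat.Prime 5) := ⟨by norm_num⟩
  have hm : (X ^ 3 + 3 * X + 2 : Polynomial ℤ).Monic := by
    monicity!
  apply hm.irreducible_of_irreducible_map (Int.castRingHom (ZMod 5))
  have hmap : (X ^ 3 + 3 * X + 2 : Polynomial ℤ).map (Int.castRingHom (ZMod 5)) =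
      (X ^ 3 + 3 * X + 2 : Polynomial (ZMod 5)) := by
    simp [Polynomial.map_add, Polynomial.map_mul, Polynomial.map_pow]
  rw [hmap]
  have hdeg : (X ^ 3 + 3 * X + 2 : Polynomial (ZMod 5)).natDegree = 3 := by
    compute_degree!
  rw [Polynomial.irreducible_iff_roots_eq_zero_of_degree_le_three (by omega) (by omega)]
  rw [Multiset.eq_zero_iff_forall_notMem]
  intro x hx
  have hne : (X ^ 3 + 3 * X + 2 : Polynomial (ZMod 5)) ≠ 0 := by
    intro h
    rw [h] at hdeg
    simp at hdeg
  rw [Polynomial.mem_roots hne] at hx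
  have : x ^ 3 + 3 * x + 2 = 0 := by
    simpa [Polynomial.IsRoot] using hx
  exact zmod5_no_root x this

private lemma gQ_irred : Irreducible (X ^ 3 + 3 * X + 2 : Polynomial ℚ) := by
  have hm : (X ^ 3 + 3 * X + 2 : Polynomial ℤ).Monic := by
    monicity!
  have := (Polynomial.IsPrimitive.Int.irreducible_iff_irreducible_map_cast
    hm.isPrimitive).mp gZ_irred
  have hmap : (X ^ 3 + 3 * X + 2 : Polynomial ℤ).map (Int.castRingHom ℚ) =
      (X ^ 3 + 3 * X + 2 : Polynomial ℚ) := by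
    simp [Polynomial.map_add, Polynomial.map_mul, Polynomial.map_pow]
  rwa [hmap] at this

/-- The polynomial `X³ − 3X − 2i` is irreducible over `ℚ(i)` (realized as the fourth
cyclotomic field, with `i` a primitive fourth root of unity). -/
theorem stmt19 (i : CyclotomicField 4 ℚ) (hi : IsPrimitiveRoot i 4) :
    Irreducible (Polynomial.X ^ 3 - 3 * Polynomial.X - Polynomial.C (2 * i) :
      Polynomial (CyclotomicField 4 ℚ)) := by
  have hi2 : i ^ 2 = -1 := by
    have h4 : i ^ 4 = 1 := hi.pow_eq_one
    have h : (i ^ 2 - 1) * (i ^ 2 + 1) = 0 := by linear_combination h4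
    rcases mul_eq_zero.mp h with h | h
    · exact absurd (sub_eq_zero.mp h)
        (hi.pow_ne_one_of_pos_of_lt (by norm_num) (by norm_num))
    · linear_combination h
  have hdeg : (Polynomial.X ^ 3 - 3 * Polynomial.X - Polynomial.C (2 * i) :
      Polynomial (CyclotomicField 4 ℚ)).natDegree = 3 := by
    compute_degree!
  rw [Polynomial.irreducible_iff_roots_eq_zero_of_degree_le_three (by omega) (by omega)]
  rw [Multiset.eq_zero_iff_forall_notMem]
  intro x hx
  have hne : (Polynomial.X ^ 3 - 3 * Polynomial.X - Polynomial.C (2 * i) :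
      Polynomial (CyclotomicField 4 ℚ)) ≠ 0 := by
    intro h
    rw [h] at hdeg
    simp at hdeg
  rw [Polynomial.mem_roots hne] at hx
  have hroot : x ^ 3 - 3 * x - 2 * i = 0 := by
    simpa [Polynomial.IsRoot] using hx
  set y : CyclotomicField 4 ℚ := -(i * x) with hy_def
  have hy : y ^ 3 + 3 * y + 2 = 0 := by
    rw [hy_def]
    linear_combination i * hroot + (2 - i * x ^ 3) * hi2
  have haev : (Polynomial.aeval y) (X ^ 3 + 3 * X + 2 : Polynomial ℚ) = 0 := by
    simp only [map_add, map_mul, map_pow, Polynomial.aeval_X, map_ofNat]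
    linear_combination hy
  have hgm : (X ^ 3 + 3 * X + 2 : Polynomial ℚ).Monic := by
    monicity!
  have hmin : minpoly ℚ y = (X ^ 3 + 3 * X + 2 : Polynomial ℚ) :=
    (minpoly.eq_of_irreducible_of_monic gQ_irred haev hgm).symm
  haveI : IsCyclotomicExtension {4} ℚ (CyclotomicField 4 ℚ) :=
    CyclotomicField.isCyclotomicExtension 4 ℚ
  haveI : FiniteDimensional ℚ (CyclotomicField 4 ℚ) :=
    IsCyclotomicExtension.finiteDimensional {4} ℚ (CyclotomicField 4 ℚ)
  have hle : (minpoly ℚ y).natDegree ≤ Module.finrank ℚ (CyclotomicField 4 ℚ) :=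
    minpoly.natDegree_le y
  have hfr : Module.finrank ℚ (CyclotomicField 4 ℚ) = 2 := by
    rw [IsCyclotomicExtension.finrank (n := 4) (CyclotomicField 4 ℚ)
      (Polynomial.cyclotomic.irreducible_rat (by norm_num))]
    rfl
  rw [hmin, hfr] at hle
  have : (X ^ 3 + 3 * X + 2 : Polynomial ℚ).natDegree = 3 := by compute_degree!
  omega
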